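/- For partial n-place functions f, g₁,…,gₙ, h on A and any index i: f[g₁…gₙ] ∘ᵢ h = f[(g₁ ∘ᵢ h) … (gₙ ∘ᵢ h)]. -/

import Mathlib

/-- The type of partial `n`-place functions on `A`. -/
abbrev PFn (n : ℕ) (A : Type) := (Fin n → A) → Option A

/-- Menger superposition `f[g₁ … gₙ]`. -/
def Menger {n : ℕ} {A : Type} (f : PFn n A) (g : Fin n → PFn n A) : PFn n A :=
  fun a => if h : ∀ i, (g i a).isSome then f (fun i => (g i a).get (h i)) else none

/-- The `i`-th `n`-place projector `Iⁱ`. -/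
def proj {n : ℕ} {A : Type} (i : Fin n) : PFn n A := fun a => some (a i)

/-- The `i`-th Mann composition `f ∘ᵢ g`. -/
def mann {n : ℕ} {A : Type} (i : Fin n) (f g : PFn n A) : PFn n A :=
  fun a => (g a).bind fun b => f (Function.update a i b)

/-- Iterated Mann composition `f ∘ᵢ₁ g₁ ∘ᵢ₂ ⋯ ∘ᵢₛ gₛ` (left to right). -/
def iter {n : ℕ} {A : Type} (f : PFn n A) : List (Fin n × PFn n A) → PFn n A
  | [] => f
  | p :: l => iter (mann p.1 f p.2) l

/-- `μᵢ(∘ᵢ₁ … ∘ᵢₛ g₁ … gₛ)`. -/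
def mu {n : ℕ} {A : Type} (i : Fin n) : List (Fin n × PFn n A) → Option (PFn n A)
  | [] => none
  | p :: l => if p.1 = i then some (iter p.2 l) else mu i l

lemma menger_mann_aux {n : ℕ} {A : Type} (i : Fin n) (f : PFn n A)
    (x : Option A) (G : Fin n → A → Option A) :
    (x.bind fun b => if h : ∀ k, (G k b).isSome then f (fun k => (G k b).get (h k)) else none)
    = if h : ∀ k, (x.bind (G k)).isSome then f (fun k => (x.bind (G k)).get (h k)) else none := by
  cases x with
  | none =>
    rw [dif_neg]
    · rfl
    · intro H; simpa using H i
  | some b => simp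

/-- `f[g₁…gₙ] ∘ᵢ h = f[(g₁ ∘ᵢ h) … (gₙ ∘ᵢ h)]`. -/
theorem menger_mann {n : ℕ} {A : Type} (i : Fin n) (f : PFn n A)
    (g : Fin n → PFn n A) (h : PFn n A) :
    mann i (Menger f g) h = Menger f (fun k => mann i (g k) h) := by
  funext a
  simp only [mann, Menger]
  exact menger_mann_aux i f (h a) (fun k b => g k (Function.update a i b))
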